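/- arXiv:1502.05306 — 3 statements merged into one kernel-verified Lean document; each statement's English description precedes it below -/
import Mathlib

section
/- Let d ≥ 2 and let φ(z) = P(z)/Q(z) be a rational map of degree d, where P(z) = Σ_{k=0}^d a_k z^k and Q(z) = Σ_{k=0}^d b_k z^k are coprime with max(deg P, deg Q) = d. Then φ commutes with the imaginary reflection τ(z) = -1/conj(z) if and only if d is odd and there exists θ ∈ ℝ such that b_k = (-1)^k e^{iθ} conj(a_{d-k}) for all k = 0,...,d. -/
open OnePoint Complex Polynomial

/-- The Möbius transformation determined by the matrix `[[a,b],[c,d]]`,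
acting on the Riemann sphere `OnePoint ℂ`. -/
noncomputable def moeb (a b c d : ℂ) (p : OnePoint ℂ) : OnePoint ℂ :=
  OnePoint.elim p (if c = 0 then ∞ else ((a / c : ℂ) : OnePoint ℂ))
    (fun z => if c * z + d = 0 then ∞ else (((a * z + b) / (c * z + d) : ℂ) : OnePoint ℂ))

/-- Complex conjugation extended to the Riemann sphere. -/
noncomputable def sphConj (p : OnePoint ℂ) : OnePoint ℂ :=
  OnePoint.elim p ∞ (fun z => ((starRingEnd ℂ) z : OnePoint ℂ))

/-- The imaginary reflection `τ(z) = -1/conj z` on the Riemann sphere. -/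
noncomputable def tauSph (p : OnePoint ℂ) : OnePoint ℂ :=
  moeb 0 (-1) 1 0 (sphConj p)

/-- The rational map on the Riemann sphere determined by a quotient `P/Q`
of (coprime) polynomials. -/
noncomputable def ratMap (P Q : Polynomial ℂ) (p : OnePoint ℂ) : OnePoint ℂ :=
  OnePoint.elim p
    (if Q.degree < P.degree then ∞
     else ((P.coeff Q.natDegree / Q.leadingCoeff : ℂ) : OnePoint ℂ))
    (fun z => if Q.eval z = 0 then ∞ else ((P.eval z / Q.eval z : ℂ) : OnePoint ℂ))


noncomputable def conj' (P : Polynomial ℂ) : Polynomial ℂ := P.map (starRingEnd ℂ)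

lemma conj'_eval (P : Polynomial ℂ) (w : ℂ) :
    (conj' P).eval w = (starRingEnd ℂ) (P.eval ((starRingEnd ℂ) w)) := by
  rw [conj', Polynomial.eval_map]
  conv_lhs => rw [show w = (starRingEnd ℂ) ((starRingEnd ℂ) w) by simp]
  rw [Polynomial.eval₂_at_apply]

lemma conj'_coeff (P : Polynomial ℂ) (j : ℕ) :
    (conj' P).coeff j = (starRingEnd ℂ) (P.coeff j) := Polynomial.coeff_map _ _

lemma sumC_coeff (d : ℕ) (c : ℕ → ℂ) (j : ℕ) :
    (∑ k ∈ Finset.range (d+1), C (c k) * X^k).coeff j = if j ≤ d then c j else 0 := by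
  rw [Polynomial.finset_sum_coeff]
  simp only [Polynomial.coeff_C_mul, Polynomial.coeff_X_pow, mul_ite, mul_one, mul_zero]
  rw [Finset.sum_ite_eq (Finset.range (d+1)) j c]
  simp [Nat.lt_succ_iff]

lemma sumC_eval (d : ℕ) (c : ℕ → ℂ) (z : ℂ) :
    (∑ k ∈ Finset.range (d+1), C (c k) * X^k).eval z
      = ∑ k ∈ Finset.range (d+1), c k * z^k := by
  simp [Polynomial.eval_finset_sum]

lemma sumC_natDegree_le (d : ℕ) (c : ℕ → ℂ) :
    (∑ k ∈ Finset.range (d+1), C (c k) * X^k).natDegree ≤ d := by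
  apply Polynomial.natDegree_sum_le_of_forall_le
  intro k hk
  apply le_trans (Polynomial.natDegree_C_mul_le _ _)
  simp [Nat.lt_succ_iff] at hk ⊢
  exact hk

noncomputable def rev' (d : ℕ) (P : Polynomial ℂ) : Polynomial ℂ :=
  ∑ k ∈ Finset.range (d+1), C ((-1:ℂ)^(d-k) * P.coeff (d-k)) * X^k



lemma rev'_coeff (d : ℕ) (P : Polynomial ℂ) (j : ℕ) (hj : j ≤ d) :
    (rev' d P).coeff j = (-1:ℂ)^(d-j) * P.coeff (d-j) := by
  rw [rev', sumC_coeff]; simp [hj]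

lemma rev'_coeff_gt (d : ℕ) (P : Polynomial ℂ) (j : ℕ) (hj : d < j) :
    (rev' d P).coeff j = 0 := by
  rw [rev', sumC_coeff]; simp [Nat.not_le.mpr hj]

lemma rev'_eval (d : ℕ) (P : Polynomial ℂ) (hP : P.natDegree ≤ d) (w : ℂ) (hw : w ≠ 0) :
    (rev' d P).eval w = w ^ d * P.eval (-1 / w) := by
  rw [rev', Polynomial.eval_finset_sum,
    Polynomial.eval_eq_sum_range' (Nat.lt_succ_of_le hP) (-1/w), Finset.mul_sum,
    ← Finset.sum_range_reflect]
  apply Finset.sum_congr rfl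
  intro k hk
  simp only [Finset.mem_range, Nat.lt_succ_iff] at hk
  have h1 : d + 1 - 1 - k = d - k := by omega
  have h2 : d - (d - k) = k := by omega
  rw [h1, h2]
  have h3 : w ^ d = w ^ (d - k) * w ^ k := by
    rw [← pow_add]; congr 1; omega
  simp only [Polynomial.eval_mul, Polynomial.eval_C, Polynomial.eval_pow, Polynomial.eval_X]
  rw [h3]
  field_simp
  rw [neg_pow (1 / w) k, one_div, inv_pow, mul_assoc (P.coeff k), mul_left_comm (w ^ k),
    mul_inv_cancel₀ (pow_ne_zero _ hw), mul_one]
  ring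





lemma tauSph_infty : tauSph ∞ = ((0:ℂ) : OnePoint ℂ) := by
  simp [tauSph, sphConj, moeb, OnePoint.elim, OnePoint.infty, OnePoint.some]; rfl

lemma tauSph_zero : tauSph ((0:ℂ) : OnePoint ℂ) = ∞ := by
  simp [tauSph, sphConj, moeb]

lemma tauSph_coe (z : ℂ) (hz : z ≠ 0) :
    tauSph (z : OnePoint ℂ) = ((-1 / (starRingEnd ℂ) z : ℂ) : OnePoint ℂ) := by
  have : (starRingEnd ℂ) z ≠ 0 := by simpa using hz
  simp [tauSph, sphConj, moeb, this]

lemma ratMap_coe (P Q : Polynomial ℂ) (z : ℂ) :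
    ratMap P Q (z : OnePoint ℂ)
      = if Q.eval z = 0 then ∞ else ((P.eval z / Q.eval z : ℂ) : OnePoint ℂ) := rfl

lemma ratMap_infty (P Q : Polynomial ℂ) :
    ratMap P Q ∞ = (if Q.degree < P.degree then ∞
     else ((P.coeff Q.natDegree / Q.leadingCoeff : ℂ) : OnePoint ℂ)) := rfl

lemma pointwise (d : ℕ) (P Q : Polynomial ℂ) (lam : ℂ)
    (hP0 : P ≠ 0) (hQ0 : Q ≠ 0)
    (hPd : P.natDegree ≤ d) (hQd : Q.natDegree ≤ d)
    (hdeg : max P.natDegree Q.natDegree = d)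
    (hcop : IsCoprime P Q) (hodd : Odd d) (hlam : ‖lam‖ = 1)
    (hB : rev' d Q = C lam * conj' P) (hA : rev' d P = -(C lam * conj' Q)) :
    ∀ p, tauSph (ratMap P Q p) = ratMap P Q (tauSph p) := by
  have hd0 : d ≠ 0 := by
    rcases hodd with ⟨m, rfl⟩; omega
  have hlam0 : lam ≠ 0 := by
    intro h; rw [h] at hlam; simp at hlam
  have hns : Complex.normSq lam = 1 := by rw [← Complex.sq_norm, hlam]; norm_num
  have hll : (starRingEnd ℂ) lam * lam = 1 := by
    rw [mul_comm, Complex.mul_conj, hns]; norm_num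
  have noroot : ∀ z : ℂ, P.eval z = 0 → Q.eval z ≠ 0 := by
    intro z hp hq
    have h := hcop.map (Polynomial.evalRingHom z)
    simp only [Polynomial.coe_evalRingHom, hp, hq] at h
    exact not_isCoprime_zero_zero h
  have hc1 : Q.coeff 0 = lam * (starRingEnd ℂ) (P.coeff d) := by
    have h := congrArg (fun p => Polynomial.coeff p d) hB
    simpa [rev'_coeff d Q d le_rfl, conj'_coeff] using h
  have hc2 : Q.coeff d = -(lam * (starRingEnd ℂ) (P.coeff 0)) := by
    have h := congrArg (fun p => Polynomial.coeff p 0) hB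
    simp only [rev'_coeff d Q 0 (Nat.zero_le d), conj'_coeff, Nat.sub_zero,
      Odd.neg_one_pow hodd, Polynomial.coeff_C_mul] at h
    linear_combination -h
  have hPdeq : P.natDegree = d ↔ P.coeff d ≠ 0 := by
    constructor
    · intro h; rw [← h]; exact Polynomial.leadingCoeff_ne_zero.mpr hP0
    · intro h; exact le_antisymm hPd (Polynomial.le_natDegree_of_ne_zero h)
  have hQdeq : Q.natDegree = d ↔ Q.coeff d ≠ 0 := by
    constructor
    · intro h; rw [← h]; exact Polynomial.leadingCoeff_ne_zero.mpr hQ0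
    · intro h; exact le_antisymm hQd (Polynomial.le_natDegree_of_ne_zero h)
  have hor : P.natDegree = d ∨ Q.natDegree = d := by
    rcases max_choice P.natDegree Q.natDegree with h | h
    · left; rw [← hdeg, h]
    · right; rw [← hdeg, h]
  have E2 : ∀ z : ℂ, z ≠ 0 → ((starRingEnd ℂ) z)^d * Q.eval (-1 / (starRingEnd ℂ) z)
      = lam * (starRingEnd ℂ) (P.eval z) := by
    intro z hz
    have hzc : (starRingEnd ℂ) z ≠ 0 := by simpa using hz
    have h := congrArg (Polynomial.eval ((starRingEnd ℂ) z)) hB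
    rw [rev'_eval d Q hQd _ hzc] at h
    simpa [conj'_eval] using h
  have E1 : ∀ z : ℂ, z ≠ 0 → ((starRingEnd ℂ) z)^d * P.eval (-1 / (starRingEnd ℂ) z)
      = -(lam * (starRingEnd ℂ) (Q.eval z)) := by
    intro z hz
    have hzc : (starRingEnd ℂ) z ≠ 0 := by simpa using hz
    have h := congrArg (Polynomial.eval ((starRingEnd ℂ) z)) hA
    rw [rev'_eval d P hPd _ hzc] at h
    simpa [conj'_eval] using h
  intro p
  induction p using OnePoint.rec with
  | infty =>
    have degiff : Q.degree < P.degree ↔ Q.natDegree < P.natDegree := by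
      rw [Polynomial.degree_eq_natDegree hQ0, Polynomial.degree_eq_natDegree hP0]
      exact Nat.cast_lt
    rw [tauSph_infty, ratMap_coe, ratMap_infty]
    by_cases hdlt : Q.degree < P.degree
    · have hlt : Q.natDegree < P.natDegree := degiff.mp hdlt
      have hPn : P.natDegree = d := by
        rcases hor with h | h
        · exact h
        · omega
      have hQcd : Q.coeff d = 0 := Polynomial.coeff_eq_zero_of_natDegree_lt (by omega)
      have hPc0 : P.coeff 0 = 0 := by
        rw [hQcd] at hc2
        have h0 : lam * (starRingEnd ℂ) (P.coeff 0) = 0 := by linear_combination hc2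
        have : (starRingEnd ℂ) (P.coeff 0) = 0 := by
          rcases mul_eq_zero.mp h0 with h | h
          · exact absurd h hlam0
          · exact h
        simpa using this
      have hPcd : P.coeff d ≠ 0 := by
        rw [← hPn]; exact Polynomial.leadingCoeff_ne_zero.mpr hP0
      have hQe0 : Q.eval 0 ≠ 0 := by
        rw [← Polynomial.coeff_zero_eq_eval_zero, hc1]
        simp [hlam0, hPcd]
      rw [if_pos hdlt, tauSph_infty, if_neg hQe0, ← Polynomial.coeff_zero_eq_eval_zero, hPc0,
        zero_div]
    · have hle : P.natDegree ≤ Q.natDegree := by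
        have := degiff.not.mp hdlt; omega
      have hQn : Q.natDegree = d := by
        rcases hor with h | h
        · omega
        · exact h
      rw [if_neg hdlt, hQn]
      have hlQ : Q.leadingCoeff = Q.coeff d := by rw [Polynomial.leadingCoeff, hQn]
      by_cases hPcd : P.coeff d = 0
      · have hQe0 : Q.eval 0 = 0 := by
          rw [← Polynomial.coeff_zero_eq_eval_zero, hc1, hPcd]; simp
        rw [if_pos hQe0]
        have hv : P.coeff d / Q.leadingCoeff = 0 := by rw [hPcd, zero_div]
        rw [hv, tauSph_zero]
      · have hQe0 : Q.eval 0 ≠ 0 := by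
          rw [← Polynomial.coeff_zero_eq_eval_zero, hc1]
          simp [hlam0, hPcd]
        have hQcd : Q.coeff d ≠ 0 := by rw [← hQn]; exact Polynomial.leadingCoeff_ne_zero.mpr hQ0
        have hPc0 : P.coeff 0 ≠ 0 := by
          intro h
          rw [h] at hc2; simp at hc2
          exact hQcd hc2
        have hv : P.coeff d / Q.leadingCoeff ≠ 0 := by
          rw [hlQ]; exact div_ne_zero hPcd hQcd
        rw [if_neg hQe0, tauSph_coe _ hv, OnePoint.coe_eq_coe, hlQ,
          ← Polynomial.coeff_zero_eq_eval_zero, ← Polynomial.coeff_zero_eq_eval_zero, hc1, hc2]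
        have h1 : (starRingEnd ℂ) (P.coeff d) ≠ 0 := by simpa using hPcd
        have h2 : (starRingEnd ℂ) (P.coeff 0) ≠ 0 := by simpa using hPc0
        simp only [map_div₀, map_neg, map_mul, map_inv₀, Complex.conj_conj]
        field_simp
        ring_nf
        linear_combination hll
  | coe z =>
    by_cases hz : z = 0
    · subst hz
      rw [tauSph_zero, ratMap_coe, ratMap_infty]
      by_cases hQe : Q.eval 0 = 0
      · have hQc0 : Q.coeff 0 = 0 := by rwa [Polynomial.coeff_zero_eq_eval_zero]
        have hPcd : P.coeff d = 0 := by
          rw [hQc0] at hc1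
          have : (starRingEnd ℂ) (P.coeff d) = 0 := by
            rcases mul_eq_zero.mp hc1.symm with h | h
            · exact absurd h hlam0
            · exact h
          simpa using this
        have hPn : P.natDegree ≠ d := fun h =>
          (Polynomial.leadingCoeff_ne_zero.mpr hP0)
            (by rw [Polynomial.leadingCoeff, h]; exact hPcd)
        have hQn : Q.natDegree = d := by
          rcases hor with h | h
          · exact absurd h hPn
          · exact h
        have hdlt : ¬ Q.degree < P.degree := by
          rw [Polynomial.degree_eq_natDegree hQ0, Polynomial.degree_eq_natDegree hP0]
          rw [not_lt, Nat.cast_le]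
          omega
        rw [if_pos hQe, tauSph_infty, if_neg hdlt, hQn, hPcd, zero_div]
      · have hQc0 : Q.coeff 0 ≠ 0 := by rwa [Polynomial.coeff_zero_eq_eval_zero]
        have hPcd : P.coeff d ≠ 0 := by
          intro h; rw [h] at hc1; simp at hc1; exact hQc0 hc1
        have hPn : P.natDegree = d := hPdeq.mpr hPcd
        rw [if_neg hQe]
        by_cases hPe : P.eval 0 = 0
        · have hPc0 : P.coeff 0 = 0 := by rwa [Polynomial.coeff_zero_eq_eval_zero]
          have hQcd : Q.coeff d = 0 := by rw [hc2, hPc0]; simp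
          have hQn : Q.natDegree ≠ d := fun h =>
            (Polynomial.leadingCoeff_ne_zero.mpr hQ0)
              (by rw [Polynomial.leadingCoeff, h]; exact hQcd)
          have hdlt : Q.degree < P.degree := by
            rw [Polynomial.degree_eq_natDegree hQ0, Polynomial.degree_eq_natDegree hP0,
              Nat.cast_lt]
            omega
          rw [hPe, zero_div, tauSph_zero, if_pos hdlt]
        · have hv : P.eval 0 / Q.eval 0 ≠ 0 := div_ne_zero hPe hQe
          have hQcd : Q.coeff d ≠ 0 := by
            rw [hc2]
            simp only [ne_eq, neg_eq_zero]
            intro h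
            rcases mul_eq_zero.mp h with h1' | h1'
            · exact hlam0 h1'
            · exact hPe (by simpa [Polynomial.coeff_zero_eq_eval_zero] using h1')
          have hQn : Q.natDegree = d := hQdeq.mpr hQcd
          have hdlt : ¬ Q.degree < P.degree := by
            rw [Polynomial.degree_eq_natDegree hQ0, Polynomial.degree_eq_natDegree hP0,
              not_lt, Nat.cast_le]
            omega
          have hlQ : Q.leadingCoeff = Q.coeff d := by rw [Polynomial.leadingCoeff, hQn]
          rw [tauSph_coe _ hv, if_neg hdlt, OnePoint.coe_eq_coe, hQn, hlQ,
            ← Polynomial.coeff_zero_eq_eval_zero, ← Polynomial.coeff_zero_eq_eval_zero,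
            hc1, hc2]
          have h1 : (starRingEnd ℂ) (P.coeff d) ≠ 0 := by simpa using hPcd
          have hPc0 : P.coeff 0 ≠ 0 := by rwa [Polynomial.coeff_zero_eq_eval_zero]
          have h2 : (starRingEnd ℂ) (P.coeff 0) ≠ 0 := by simpa using hPc0
          simp only [map_div₀, map_neg, map_mul, map_inv₀, Complex.conj_conj]
          field_simp
          ring_nf
          linear_combination -hll

    · have hzc : (starRingEnd ℂ) z ≠ 0 := by simpa using hz
      have hpow : ((starRingEnd ℂ) z) ^ d ≠ 0 := pow_ne_zero _ hzc
      have e1 := E1 z hz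
      have e2 := E2 z hz
      have hQ'iff : Q.eval (-1 / (starRingEnd ℂ) z) = 0 ↔ P.eval z = 0 := by
        constructor
        · intro h; rw [h, mul_zero] at e2
          have : (starRingEnd ℂ) (P.eval z) = 0 := by
            rcases mul_eq_zero.mp e2.symm with h' | h'
            · exact absurd h' hlam0
            · exact h'
          simpa using this
        · intro h
          rw [h] at e2
          simp only [map_zero, mul_zero] at e2
          rcases mul_eq_zero.mp e2 with h1' | h1'
          · exact absurd h1' hpow
          · exact h1'
      have hP'iff : P.eval (-1 / (starRingEnd ℂ) z) = 0 ↔ Q.eval z = 0 := by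
        constructor
        · intro h; rw [h, mul_zero] at e1
          have : (starRingEnd ℂ) (Q.eval z) = 0 := by
            have := e1.symm
            rw [neg_eq_zero] at this
            rcases mul_eq_zero.mp this with h' | h'
            · exact absurd h' hlam0
            · exact h'
          simpa using this
        · intro h
          rw [h] at e1
          simp only [map_zero, mul_zero, neg_zero] at e1
          rcases mul_eq_zero.mp e1 with h1' | h1'
          · exact absurd h1' hpow
          · exact h1'
      rw [tauSph_coe z hz, ratMap_coe, ratMap_coe]
      by_cases hQe : Q.eval z = 0
      · have hPe : P.eval z ≠ 0 := fun h => noroot z h hQe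
        have hQ'ne : Q.eval (-1 / (starRingEnd ℂ) z) ≠ 0 := fun h => hPe (hQ'iff.mp h)
        rw [if_pos hQe, tauSph_infty, if_neg hQ'ne, hP'iff.mpr hQe, zero_div]
      · by_cases hPe : P.eval z = 0
        · rw [if_neg hQe, hPe, zero_div, tauSph_zero, if_pos (hQ'iff.mpr hPe)]
        · have hQ'ne : Q.eval (-1 / (starRingEnd ℂ) z) ≠ 0 := fun h => hPe (hQ'iff.mp h)
          have hv : P.eval z / Q.eval z ≠ 0 := div_ne_zero hPe hQe
          rw [if_neg hQe, tauSph_coe _ hv, if_neg hQ'ne, OnePoint.coe_eq_coe]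
          have h1 : (starRingEnd ℂ) (P.eval z) ≠ 0 := by simpa using hPe
          have h2 : (starRingEnd ℂ) (Q.eval z) ≠ 0 := by simpa using hQe
          have eP : P.eval (-1 / (starRingEnd ℂ) z)
              = -(lam * (starRingEnd ℂ) (Q.eval z)) / ((starRingEnd ℂ) z) ^ d :=
            (eq_div_iff hpow).mpr (by linear_combination e1)
          have eQ : Q.eval (-1 / (starRingEnd ℂ) z)
              = lam * (starRingEnd ℂ) (P.eval z) / ((starRingEnd ℂ) z) ^ d :=
            (eq_div_iff hpow).mpr (by linear_combination e2)
          rw [eP, eQ]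
          simp only [map_div₀, map_neg, map_mul, map_inv₀, Complex.conj_conj]
          field_simp

lemma forward_poly (d : ℕ) (P Q : Polynomial ℂ)
    (hP0 : P ≠ 0) (hQ0 : Q ≠ 0) (hPd : P.natDegree ≤ d) (hQd : Q.natDegree ≤ d)
    (hcomm : ∀ p, tauSph (ratMap P Q p) = ratMap P Q (tauSph p)) :
    conj' Q * rev' d Q + conj' P * rev' d P = 0 := by
  by_contra hne
  have hfin : {x : ℂ | (conj' Q * rev' d Q + conj' P * rev' d P).IsRoot x}.Finite :=
    Polynomial.finite_setOf_isRoot hne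
  have hbad : ({(0:ℂ)} ∪ {x | P.IsRoot x} ∪ {x | Q.IsRoot x}).Finite :=
    ((Set.finite_singleton _).union (Polynomial.finite_setOf_isRoot hP0)).union
      (Polynomial.finite_setOf_isRoot hQ0)
  have hsub : (starRingEnd ℂ) '' ({(0:ℂ)} ∪ {x | P.IsRoot x} ∪ {x | Q.IsRoot x})ᶜ
      ⊆ {x | (conj' Q * rev' d Q + conj' P * rev' d P).IsRoot x} := by
    rintro w ⟨z, hz, rfl⟩
    simp only [Set.mem_compl_iff, Set.mem_union, Set.mem_singleton_iff, Set.mem_setOf_eq,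
      not_or, Polynomial.IsRoot] at hz ⊢
    obtain ⟨⟨hz0, hPe⟩, hQe⟩ := hz
    have hzc : (starRingEnd ℂ) z ≠ 0 := by simpa using hz0
    have hv : P.eval z / Q.eval z ≠ 0 := div_ne_zero hPe hQe
    have hc := hcomm (z : OnePoint ℂ)
    rw [ratMap_coe, if_neg hQe, tauSph_coe _ hv, tauSph_coe z hz0, ratMap_coe] at hc
    have hQ'ne : Q.eval (-1 / (starRingEnd ℂ) z) ≠ 0 := by
      intro h
      rw [if_pos h] at hc
      exact OnePoint.coe_ne_infty _ hc
    rw [if_neg hQ'ne, OnePoint.coe_eq_coe] at hc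
    -- hc : -1 / conj (P z / Q z) = P(-1/conj z) / Q(-1/conj z)
    have h1 : (starRingEnd ℂ) (P.eval z) ≠ 0 := by simpa using hPe
    have h2 : (starRingEnd ℂ) (Q.eval z) ≠ 0 := by simpa using hQe
    rw [map_div₀] at hc
    field_simp at hc
    rw [← neg_div, eq_div_iff hQ'ne] at hc
    simp only [Polynomial.eval_add, Polynomial.eval_mul, conj'_eval,
      rev'_eval d Q hQd _ hzc, rev'_eval d P hPd _ hzc, Complex.conj_conj]
    linear_combination (-((starRingEnd ℂ) z)^d) * hc
  exact (hbad.infinite_compl.image ((starRingEnd ℂ)).injective.injOn).mono hsub hfin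

lemma rev_coprime (d : ℕ) (P Q : Polynomial ℂ)
    (hP0 : P ≠ 0) (hQ0 : Q ≠ 0) (hPd : P.natDegree ≤ d) (hQd : Q.natDegree ≤ d)
    (hdeg : max P.natDegree Q.natDegree = d) (hcop : IsCoprime P Q) :
    IsCoprime (rev' d P) (rev' d Q) := by
  rw [Polynomial.isCoprime_iff_aeval_ne_zero_of_isAlgClosed (k := ℂ) ℂ (rev' d P) (rev' d Q)]
  intro w
  by_contra hw
  push_neg at hw
  obtain ⟨h1, h2⟩ := hw
  rw [Polynomial.coe_aeval_eq_eval] at h1 h2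
  by_cases hw0 : w = 0
  · subst hw0
    rw [← Polynomial.coeff_zero_eq_eval_zero, rev'_coeff d P 0 (Nat.zero_le d)] at h1
    rw [← Polynomial.coeff_zero_eq_eval_zero, rev'_coeff d Q 0 (Nat.zero_le d)] at h2
    simp only [Nat.sub_zero, mul_eq_zero] at h1 h2
    have hP' : P.coeff d = 0 := by
      rcases h1 with h | h
      · exact absurd h (pow_ne_zero _ (by norm_num))
      · exact h
    have hQ' : Q.coeff d = 0 := by
      rcases h2 with h | h
      · exact absurd h (pow_ne_zero _ (by norm_num))
      · exact h
    have hor : P.natDegree = d ∨ Q.natDegree = d := by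
      rcases max_choice P.natDegree Q.natDegree with h | h
      · left; rw [← hdeg, h]
      · right; rw [← hdeg, h]
    rcases hor with h | h
    · exact (Polynomial.leadingCoeff_ne_zero.mpr hP0)
        (by rw [Polynomial.leadingCoeff, h]; exact hP')
    · exact (Polynomial.leadingCoeff_ne_zero.mpr hQ0)
        (by rw [Polynomial.leadingCoeff, h]; exact hQ')
  · rw [rev'_eval d P hPd w hw0, mul_eq_zero] at h1
    rw [rev'_eval d Q hQd w hw0, mul_eq_zero] at h2
    have hpow : w ^ d ≠ 0 := pow_ne_zero _ hw0
    have hPe : P.eval (-1 / w) = 0 := by tauto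
    have hQe : Q.eval (-1 / w) = 0 := by tauto
    have h := hcop.map (Polynomial.evalRingHom (-1 / w))
    simp only [Polynomial.coe_evalRingHom, hPe, hQe] at h
    exact not_isCoprime_zero_zero h

lemma factor (d : ℕ) (P Q : Polynomial ℂ)
    (hP0 : P ≠ 0) (hQ0 : Q ≠ 0) (hPd : P.natDegree ≤ d) (hQd : Q.natDegree ≤ d)
    (hdeg : max P.natDegree Q.natDegree = d) (hcop : IsCoprime P Q)
    (hid : conj' Q * rev' d Q + conj' P * rev' d P = 0) :
    ∃ c : ℂ, c ≠ 0 ∧ rev' d Q = C c * conj' P ∧ rev' d P = -(C c * conj' Q) := by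
  have hcop' : IsCoprime (conj' P) (conj' Q) := hcop.map (Polynomial.mapRingHom (starRingEnd ℂ))
  have hdvd : conj' P ∣ rev' d Q :=
    hcop'.dvd_of_dvd_mul_left ⟨-(rev' d P), by linear_combination hid⟩
  obtain ⟨u, hu⟩ := hdvd
  have hPbar0 : conj' P ≠ 0 := Polynomial.map_ne_zero hP0
  have hrevP : rev' d P = -(conj' Q * u) := by
    have h2 : conj' P * (conj' Q * u + rev' d P) = 0 := by
      rw [hu] at hid; linear_combination hid
    rcases mul_eq_zero.mp h2 with h | h
    · exact absurd h hPbar0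
    · linear_combination h
  have hrevcop : IsCoprime (rev' d P) (rev' d Q) :=
    rev_coprime d P Q hP0 hQ0 hPd hQd hdeg hcop
  have hunit : IsUnit u := hrevcop.isUnit_of_dvd' ⟨-(conj' Q), by rw [hrevP]; ring⟩
    ⟨conj' P, by rw [hu]; ring⟩
  obtain ⟨c, hcu, hC⟩ := Polynomial.isUnit_iff.mp hunit
  exact ⟨c, hcu.ne_zero, by rw [hu, ← hC]; ring, by rw [hrevP, ← hC]; ring⟩

/-- `φ = P/Q` of degree `d ≥ 2` commutes with `τ(z) = -1/conj z`
iff `d` is odd and `b_k = (-1)^k e^{iθ} conj(a_{d-k})` for some real `θ`. -/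
theorem commutes_with_tau_iff
    (d : ℕ) (hd : 2 ≤ d) (a b : ℕ → ℂ) (P Q : Polynomial ℂ)
    (hP : P = ∑ k ∈ Finset.range (d + 1), C (a k) * X ^ k)
    (hQ : Q = ∑ k ∈ Finset.range (d + 1), C (b k) * X ^ k)
    (hcop : IsCoprime P Q) (hdeg : max P.natDegree Q.natDegree = d) :
    (∀ p, tauSph (ratMap P Q p) = ratMap P Q (tauSph p)) ↔
      (Odd d ∧ ∃ θ : ℝ, ∀ k ≤ d,
        b k = (-1) ^ k * Complex.exp (θ * Complex.I) * (starRingEnd ℂ) (a (d - k))) := by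
  have hPd : P.natDegree ≤ d := by rw [← hdeg]; exact le_max_left _ _
  have hQd : Q.natDegree ≤ d := by rw [← hdeg]; exact le_max_right _ _
  have hP0 : P ≠ 0 := by
    intro h
    rw [h] at hcop
    have hu : IsUnit Q := isCoprime_zero_left.mp hcop
    have h0 : Q.natDegree = 0 := Polynomial.natDegree_eq_zero_of_isUnit hu
    rw [h] at hdeg
    simp [Polynomial.natDegree_zero, h0] at hdeg
    omega
  have hQ0 : Q ≠ 0 := by
    intro h
    rw [h] at hcop
    have hu : IsUnit P := isCoprime_zero_right.mp hcop
    have h0 : P.natDegree = 0 := Polynomial.natDegree_eq_zero_of_isUnit hu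
    rw [h] at hdeg
    simp [Polynomial.natDegree_zero, h0] at hdeg
    omega
  have hPc : ∀ i ≤ d, P.coeff i = a i := by intro i hi; rw [hP, sumC_coeff]; simp [hi]
  have hQc : ∀ i ≤ d, Q.coeff i = b i := by intro i hi; rw [hQ, sumC_coeff]; simp [hi]
  constructor
  · intro hcomm
    obtain ⟨c, hc0, hRQ, hRP⟩ :=
      factor d P Q hP0 hQ0 hPd hQd hdeg hcop
        (forward_poly d P Q hP0 hQ0 hPd hQd hcomm)
    have R1 : ∀ i ≤ d, (-1:ℂ)^(d-i) * Q.coeff (d-i) = c * (starRingEnd ℂ) (P.coeff i) := by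
      intro i hi
      have h := congrArg (fun p => Polynomial.coeff p i) hRQ
      simpa [rev'_coeff d Q i hi, conj'_coeff, Polynomial.coeff_C_mul] using h
    have R2 : ∀ i ≤ d, (-1:ℂ)^(d-i) * P.coeff (d-i) = -(c * (starRingEnd ℂ) (Q.coeff i)) := by
      intro i hi
      have h := congrArg (fun p => Polynomial.coeff p i) hRP
      simpa [rev'_coeff d P i hi, conj'_coeff, Polynomial.coeff_C_mul] using h
    set j := P.natDegree with hj
    have hjd : j ≤ d := hPd
    have hPcj : P.coeff j ≠ 0 := Polynomial.leadingCoeff_ne_zero.mpr hP0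
    have R1j := R1 j hjd
    have R2j := R2 (d - j) (by omega)
    rw [Nat.sub_sub_self hjd] at R2j
    have cR1 := congrArg (starRingEnd ℂ) R1j
    simp only [map_mul, map_pow, map_neg, map_one, Complex.conj_conj] at cR1
    have h3 : ((-1:ℂ))^(d-j) * (-1:ℂ)^j = (-1:ℂ)^d := by
      rw [← pow_add, Nat.sub_add_cancel hjd]
    have key : ((-1:ℂ))^d = -(c * (starRingEnd ℂ) c) := by
      apply mul_right_cancel₀ hPcj
      linear_combination ((-1:ℂ)^(d-j)) * R2j - c * cR1 - P.coeff j * h3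
    rw [Complex.mul_conj] at key
    have hodd : Odd d := by
      rcases Nat.even_or_odd d with he | ho
      · exfalso
        rw [he.neg_one_pow] at key
        have h4 : ((Complex.normSq c : ℝ) : ℂ) = ((-1 : ℝ) : ℂ) := by
          push_cast; linear_combination key
        have h5 : Complex.normSq c = -1 := Complex.ofReal_inj.mp h4
        nlinarith [Complex.normSq_nonneg c]
      · exact ho
    have hns : Complex.normSq c = 1 := by
      rw [hodd.neg_one_pow] at key
      have h4 : ((Complex.normSq c : ℝ) : ℂ) = ((1 : ℝ) : ℂ) := by
        push_cast; linear_combination key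
      exact Complex.ofReal_inj.mp h4
    have habs : ‖c‖ = 1 := by
      rw [Complex.norm_def, hns, Real.sqrt_one]
    refine ⟨hodd, c.arg, ?_⟩
    have hcexp : Complex.exp (c.arg * Complex.I) = c := by
      conv_rhs => rw [← Complex.norm_mul_exp_arg_mul_I c]
      rw [habs]; simp
    intro k hk
    rw [hcexp, ← hQc k hk, ← hPc (d - k) (by omega)]
    have h := R1 (d - k) (by omega)
    rw [Nat.sub_sub_self hk] at h
    have h2 : ((-1:ℂ))^k * ((-1):ℂ)^k = 1 := by
      rw [← pow_add]
      exact Even.neg_one_pow ⟨k, rfl⟩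
    linear_combination ((-1:ℂ)^k) * h - Q.coeff k * h2
  · rintro ⟨hodd, θ, hrel⟩
    set lam := Complex.exp (θ * Complex.I) with hlamdef
    have hlam : ‖lam‖ = 1 := by
      rw [hlamdef]
      exact_mod_cast Complex.norm_exp_ofReal_mul_I θ
    have hll : lam * (starRingEnd ℂ) lam = 1 := by
      rw [Complex.mul_conj, ← Complex.sq_norm, hlam]; norm_num
    have hB : rev' d Q = C lam * conj' P := by
      apply Polynomial.ext; intro i
      rw [Polynomial.coeff_C_mul, conj'_coeff]
      by_cases hi : i ≤ d
      · rw [rev'_coeff d Q i hi, hQc (d - i) (by omega), hPc i hi,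
          hrel (d - i) (by omega), Nat.sub_sub_self hi]
        have h2 : ((-1:ℂ))^(d-i) * ((-1):ℂ)^(d-i) = 1 := by
          rw [← pow_add]; exact Even.neg_one_pow ⟨d - i, rfl⟩
        linear_combination (lam * (starRingEnd ℂ) (a i)) * h2
      · rw [rev'_coeff_gt d Q i (by omega),
          Polynomial.coeff_eq_zero_of_natDegree_lt (lt_of_le_of_lt hPd (by omega))]
        simp
    have hA : rev' d P = -(C lam * conj' Q) := by
      apply Polynomial.ext; intro i
      rw [Polynomial.coeff_neg, Polynomial.coeff_C_mul, conj'_coeff]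
      by_cases hi : i ≤ d
      · rw [rev'_coeff d P i hi, hPc (d - i) (by omega), hQc i hi, hrel i hi]
        have h2 : ((-1:ℂ))^i * ((-1):ℂ)^i = 1 := by
          rw [← pow_add]; exact Even.neg_one_pow ⟨i, rfl⟩
        have h3 : ((-1:ℂ))^(d-i) * (-1:ℂ)^i = (-1:ℂ)^d := by
          rw [← pow_add, Nat.sub_add_cancel hi]
        rw [hodd.neg_one_pow] at h3
        simp only [map_mul, map_pow, map_neg, map_one, Complex.conj_conj]
        linear_combination ((-1:ℂ)^i * a (d-i)) * h3 - ((-1:ℂ)^(d-i) * a (d-i)) * h2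
          + ((-1:ℂ)^i * a (d-i)) * hll
      · rw [rev'_coeff_gt d P i (by omega),
          Polynomial.coeff_eq_zero_of_natDegree_lt (lt_of_le_of_lt hQd (by omega))]
        simp
    exact pointwise d P Q lam hP0 hQ0 hPd hQd hdeg hcop hodd hlam hB hA
end

section
/- Let φ be a rational map of degree d ≥ 2 that commutes with the rotation T(z) = e^{2πi/n} z for some n ≥ 2. Then there exists a rational map ψ such that φ(z) = z·ψ(z^n). -/
open OnePoint Complex Polynomial

lemma coeff_comp_C_mul_X (p : Polynomial ℂ) (a : ℂ) (k : ℕ) :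
    (p.comp (C a * X)).coeff k = a ^ k * p.coeff k := by
  induction p using Polynomial.induction_on' with
  | add p q hp hq => simp [add_comp, hp, hq, mul_add]
  | monomial e c =>
      rw [← C_mul_X_pow_eq_monomial, mul_comp, C_comp, X_pow_comp, mul_pow, ← C_pow,
        ← mul_assoc, ← C_mul]
      simp only [coeff_C_mul, coeff_X_pow]
      split_ifs with h
      · subst h; ring
      · ring

lemma slice_eq (n a : ℕ) (hn : 0 < n) (R : Polynomial ℂ)
    (h : ∀ k, R.coeff k ≠ 0 → k % n = a) :
    R = X ^ a * (∑ m ∈ Finset.range (R.natDegree + 1),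
        C (R.coeff (m * n + a)) * X ^ m).comp (X ^ n) := by
  have hcomp : (∑ m ∈ Finset.range (R.natDegree + 1),
      C (R.coeff (m * n + a)) * X ^ m).comp (X ^ n)
      = ∑ m ∈ Finset.range (R.natDegree + 1), C (R.coeff (m * n + a)) * X ^ (m * n) := by
    rw [Polynomial.comp, Polynomial.eval₂_finset_sum]
    refine Finset.sum_congr rfl fun m _ => ?_
    rw [eval₂_mul, eval₂_C, eval₂_X_pow, ← pow_mul, mul_comm n m]
  rw [hcomp]
  ext k
  rw [mul_comm (X ^ a), coeff_mul_X_pow', finset_sum_coeff]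
  simp only [coeff_C_mul, coeff_X_pow]
  by_cases hka : R.coeff k = 0
  · rw [hka]
    split_ifs with hak
    · refine (Finset.sum_eq_zero fun m _ => ?_).symm
      split_ifs with hm
      · have : m * n + a = k := by omega
        rw [this, hka, zero_mul]
      · rw [mul_zero]
    · rfl
  · have hmod := h k hka
    have hle : k ≤ R.natDegree := le_natDegree_of_ne_zero hka
    have hak : a ≤ k := hmod ▸ Nat.mod_le k n
    rw [if_pos hak]
    have hkeq : k = (k / n) * n + a := by
      conv_lhs => rw [← Nat.div_add_mod k n]
      rw [hmod]; ring
    rw [Finset.sum_eq_single (k / n)]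
    · rw [if_pos (by omega), ← hkeq, mul_one]
    · intro m hm hne
      rw [if_neg, mul_zero]
      intro hcon
      exact hne (by
        have : m * n = (k / n) * n := by omega
        exact Nat.eq_of_mul_eq_mul_right hn this)
    · intro hmem
      exact absurd (Finset.mem_range.mpr (by
        have : k / n ≤ k := Nat.div_le_self k n
        omega)) hmem

lemma ratMap_X_mul (P Q : Polynomial ℂ) (hP : P ≠ 0) (hQ : Q ≠ 0)
    (h0 : Q.eval 0 = 0) (p : OnePoint ℂ) :
    ratMap P Q p = ratMap (X * P) (X * Q) p := by
  cases p with
  | infty =>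
      simp only [ratMap, elim_infty]
      have hdeg : Q.degree < P.degree ↔ (X * Q).degree < (X * P).degree := by
        constructor
        · intro h
          apply degree_lt_degree
          rw [natDegree_X_mul hQ, natDegree_X_mul hP]
          exact Nat.succ_lt_succ (natDegree_lt_natDegree hQ h)
        · intro h
          apply degree_lt_degree
          have := natDegree_lt_natDegree (mul_ne_zero X_ne_zero hQ) h
          rw [natDegree_X_mul hQ, natDegree_X_mul hP] at this
          omega
      rw [natDegree_X_mul hQ, coeff_X_mul, leadingCoeff_mul, leadingCoeff_X, one_mul]
      exact if_congr hdeg rfl rfl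
  | coe z =>
      simp only [ratMap, elim_some]
      by_cases hz : z = 0
      · subst hz; simp [h0]
      · simp only [eval_mul, eval_X]
        have : z * Q.eval z = 0 ↔ Q.eval z = 0 := by
          constructor
          · intro h; rcases mul_eq_zero.mp h with h | h; exact absurd h hz; exact h
          · intro h; rw [h, mul_zero]
        rw [mul_div_mul_left _ _ hz, if_congr this.symm rfl rfl]

/-- a rational map of degree `d ≥ 2` commuting with the rotation
`T(z) = e^{2πi/n} z` (`n ≥ 2`) has the form `φ(z) = z ψ(z^n)`. -/
theorem form_of_rotation_symmetric_map
    (n d : ℕ) (hn : 2 ≤ n) (hd : 2 ≤ d) (P Q : Polynomial ℂ)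
    (hcop : IsCoprime P Q) (hdeg : max P.natDegree Q.natDegree = d)
    (hcomm : ∀ p, moeb (Complex.exp (2 * Real.pi * Complex.I / n)) 0 0 1 (ratMap P Q p)
        = ratMap P Q (moeb (Complex.exp (2 * Real.pi * Complex.I / n)) 0 0 1 p)) :
    ∃ A B : Polynomial ℂ,
      ∀ p, ratMap P Q p = ratMap (X * A.comp (X ^ n)) (B.comp (X ^ n)) p := by
  set ω : ℂ := Complex.exp (2 * Real.pi * Complex.I / n) with hω
  have hprim : IsPrimitiveRoot ω n := Complex.isPrimitiveRoot_exp n (by omega)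
  have hω0 : ω ≠ 0 := Complex.exp_ne_zero _
  -- P, Q nonzero
  have hP0 : P ≠ 0 := by
    rintro rfl
    have := Polynomial.natDegree_eq_zero_of_isUnit (isCoprime_zero_left.mp hcop)
    simp [this] at hdeg
    omega
  have hQ0 : Q ≠ 0 := by
    rintro rfl
    have := Polynomial.natDegree_eq_zero_of_isUnit (isCoprime_zero_right.mp hcop)
    simp [this] at hdeg
    omega
  -- pointwise identity
  have key : ∀ z : ℂ, ω * P.eval z * Q.eval (ω * z) = P.eval (ω * z) * Q.eval z := by
    intro z
    have h := hcomm (z : OnePoint ℂ)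
    simp only [moeb, ratMap, elim_some, zero_mul, zero_add, one_ne_zero, if_false,
      mul_zero, add_zero, div_one] at h
    by_cases hz : Q.eval z = 0
    · rw [if_pos hz, elim_infty, if_true] at h
      by_cases hz' : Q.eval (ω * z) = 0
      · rw [hz, hz']; ring
      · rw [if_neg hz'] at h
        exact absurd h (infty_ne_coe _)
    · rw [if_neg hz, elim_some] at h
      by_cases hz' : Q.eval (ω * z) = 0
      · rw [if_pos hz'] at h
        exact absurd h (coe_ne_infty _)
      · rw [if_neg hz'] at h
        rw [coe_eq_coe] at h
        field_simp at h
        linear_combination h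
  -- polynomial identity
  have hpoly : C ω * P * Q.comp (C ω * X) = P.comp (C ω * X) * Q := by
    apply Polynomial.funext
    intro z
    simp only [eval_mul, eval_C, eval_comp, eval_X]
    exact key z
  -- P divides its twist
  have hPcne : P.comp (C ω * X) ≠ 0 := by
    intro hc
    apply hP0
    apply Polynomial.funext
    intro z
    have := congrArg (Polynomial.eval (ω⁻¹ * z)) hc
    simpa [eval_comp, ← mul_assoc, mul_inv_cancel₀ hω0] using this
  have hPdvd : P ∣ P.comp (C ω * X) := by
    apply hcop.dvd_of_dvd_mul_right
    rw [← hpoly]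
    exact ⟨C ω * Q.comp (C ω * X), by ring⟩
  obtain ⟨u, hu⟩ := hPdvd
  have hu0 : u ≠ 0 := by rintro rfl; rw [mul_zero] at hu; exact hPcne hu
  have hudeg : u.natDegree = 0 := by
    have h1 : (P.comp (C ω * X)).natDegree = P.natDegree := by
      rw [natDegree_comp, natDegree_C_mul_X _ hω0, mul_one]
    rw [hu, natDegree_mul hP0 hu0] at h1
    omega
  obtain ⟨c, hc⟩ := Polynomial.natDegree_eq_zero.mp hudeg
  have hc0 : c ≠ 0 := by rintro rfl; rw [map_zero] at hc; exact hu0 hc.symm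
  have hPc : P.comp (C ω * X) = C c * P := by rw [hu, ← hc, mul_comm]
  -- Q twist
  have hQc : Q.comp (C ω * X) = C (c / ω) * Q := by
    have hcan : C ω * P ≠ 0 := mul_ne_zero (by simpa using hω0) hP0
    apply mul_left_cancel₀ hcan
    rw [hpoly, hPc]
    have : (C ω : Polynomial ℂ) * (C (c / ω)) = C c := by
      rw [← C_mul, mul_div_cancel₀ _ hω0]
    calc C c * P * Q = C ω * C (c / ω) * P * Q := by rw [this]
      _ = C ω * P * (C (c / ω) * Q) := by ring
  -- coefficient conditions
  have hPco : ∀ k, P.coeff k ≠ 0 → ω ^ k = c := by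
    intro k hk
    have := congrArg (fun p => Polynomial.coeff p k) hPc
    simp only [coeff_comp_C_mul_X, coeff_C_mul] at this
    exact mul_right_cancel₀ hk this
  have hQco : ∀ k, Q.coeff k ≠ 0 → ω ^ (k + 1) = c := by
    intro k hk
    have := congrArg (fun p => Polynomial.coeff p k) hQc
    simp only [coeff_comp_C_mul_X, coeff_C_mul] at this
    have h2 : ω ^ k = c / ω := mul_right_cancel₀ hk this
    rw [pow_succ, h2, div_mul_cancel₀ _ hω0]
  set k₀ : ℕ := P.natDegree with hk₀def
  have hk₀ : P.coeff k₀ ≠ 0 := fun h => hP0 (leadingCoeff_eq_zero.mp h)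
  have hcω : c = ω ^ k₀ := (hPco k₀ hk₀).symm
  have hord : orderOf ω = n := (hprim.eq_orderOf).symm
  have hmodeq : ∀ i j : ℕ, ω ^ i = ω ^ j → i % n = j % n := by
    intro i j hij
    apply hprim.pow_inj (Nat.mod_lt _ (by omega)) (Nat.mod_lt _ (by omega))
    calc ω ^ (i % n) = ω ^ (i % orderOf ω) := by rw [hord]
      _ = ω ^ i := pow_mod_orderOf ω i
      _ = ω ^ j := hij
      _ = ω ^ (j % orderOf ω) := (pow_mod_orderOf ω j).symm
      _ = ω ^ (j % n) := by rw [hord]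
  -- mod conditions
  have hPmod : ∀ k, P.coeff k ≠ 0 → k % n = k₀ % n := by
    intro k hk
    exact hmodeq _ _ (by rw [hPco k hk, hcω])
  have hQmod : ∀ k, Q.coeff k ≠ 0 → (k + 1) % n = k₀ % n := by
    intro k hk
    exact hmodeq _ _ (by rw [hQco k hk, hcω])
  set a : ℕ := k₀ % n with ha
  have han : a < n := Nat.mod_lt _ (by omega)
  -- case analysis on a
  by_cases ha1 : a = 1
  · -- P = X * A(X^n), Q = B(X^n)
    refine ⟨∑ m ∈ Finset.range (P.natDegree + 1), C (P.coeff (m * n + 1)) * X ^ m,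
            ∑ m ∈ Finset.range (Q.natDegree + 1), C (Q.coeff (m * n + 0)) * X ^ m, ?_⟩
    have hPs := slice_eq n 1 (by omega) P (fun k hk => ha1 ▸ hPmod k hk)
    have hQs := slice_eq n 0 (by omega) Q (fun k hk => by
      have h1 := hQmod k hk
      rw [ha1] at h1
      have h2 : 1 % n = 1 := Nat.mod_eq_of_lt (by omega)
      -- (k+1) % n = 1 → k % n = 0
      have : (k + 1) % n = (0 + 1) % n := by rw [h1, Nat.zero_add, h2]
      have := (Nat.ModEq.add_right_cancel' 1 this)
      simpa [Nat.ModEq] using this)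
    intro p
    rw [pow_one] at hPs
    rw [pow_zero, one_mul] at hQs
    rw [← hPs, ← hQs]
  · by_cases ha0 : a = 0
    · -- P = A(X^n), Q = X^(n-1) * B₀(X^n); take A := slice P, B := X * B₀
      set A : Polynomial ℂ :=
        ∑ m ∈ Finset.range (P.natDegree + 1), C (P.coeff (m * n + 0)) * X ^ m with hA
      set B₀ : Polynomial ℂ :=
        ∑ m ∈ Finset.range (Q.natDegree + 1), C (Q.coeff (m * n + (n - 1))) * X ^ m with hB
      have hPs := slice_eq n 0 (by omega) P (fun k hk => ha0 ▸ hPmod k hk)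
      have hQs := slice_eq n (n - 1) (by omega) Q (fun k hk => by
        have h1 := hQmod k hk
        rw [ha0] at h1
        -- (k+1) % n = 0 → k % n = n - 1
        have hdv : n ∣ (k + 1) := Nat.dvd_of_mod_eq_zero h1
        obtain ⟨m, hm⟩ := hdv
        have hm0 : m ≠ 0 := by rintro rfl; rw [Nat.mul_zero] at hm; omega
        obtain ⟨m', rfl⟩ : ∃ m', m = m' + 1 := ⟨m - 1, by omega⟩
        have hm2 : k + 1 = n * m' + n := by rw [hm, Nat.mul_succ]
        have hk' : k = n * m' + (n - 1) := by
          have h3 : 1 ≤ n := by omega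
          set t := n * m' with ht
          omega
        rw [hk', Nat.mul_add_mod]
        exact Nat.mod_eq_of_lt (by omega))
      rw [pow_zero, one_mul] at hPs
      refine ⟨A, X * B₀, ?_⟩
      intro p
      have hXA : X * A.comp (X ^ n) = X * P := by rw [← hPs]
      have hXB : (X * B₀).comp (X ^ n) = X * Q := by
        rw [mul_comp, X_comp, hQs]
        have h1 : n - 1 + 1 = n := by omega
        have : (X : Polynomial ℂ) ^ n = X * X ^ (n - 1) := by
          calc (X : Polynomial ℂ) ^ n = X ^ (n - 1 + 1) := by rw [h1]
            _ = X ^ (n - 1) * X := pow_succ _ _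
            _ = X * X ^ (n - 1) := by ring
        rw [← mul_assoc, ← this]
      rw [hXA, hXB]
      apply ratMap_X_mul P Q hP0 hQ0
      rw [← Polynomial.coeff_zero_eq_eval_zero]
      by_contra hcon
      have := hQmod 0 hcon
      rw [ha0, Nat.mod_eq_of_lt (show 1 < n by omega)] at this
      omega
    · -- a ≥ 2 : contradiction with coprimality
      exfalso
      have hp0 : P.coeff 0 = 0 := by
        by_contra hcon
        have := hPmod 0 hcon
        simp [← ha] at this
        omega
      have hq0 : Q.coeff 0 = 0 := by
        by_contra hcon
        have := hQmod 0 hcon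
        rw [Nat.mod_eq_of_lt (show 1 < n by omega)] at this
        omega
      obtain ⟨u, v, huv⟩ := hcop
      have := congrArg (Polynomial.eval 0) huv
      simp only [eval_add, eval_mul, eval_one, ← Polynomial.coeff_zero_eq_eval_zero,
        hp0, hq0, mul_zero, add_zero] at this
      exact zero_ne_one this
end

section
/- Let n, d ≥ 2 be integers. If there exists a rational map of degree d of the form φ(z) = z·ψ(z^n) with ψ a rational map of degree r, then d ∈ {nr - 1, nr, nr + 1}; in particular d is congruent to -1, 0, or 1 modulo n. -/
open OnePoint Complex Polynomial

/-- if `φ(z) = z ψ(z^n)` has degree `d` with `ψ` of degree `r`,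
then `d ∈ {nr-1, nr, nr+1}`. -/
theorem degree_of_rotation_symmetric_map
    (n d r : ℕ) (hn : 2 ≤ n) (hd : 2 ≤ d) (hr : 1 ≤ r)
    (A B P Q : Polynomial ℂ) (hB : B ≠ 0) (hQ : Q ≠ 0)
    (hAB : IsCoprime A B) (hrdeg : max A.natDegree B.natDegree = r)
    (hPQ : IsCoprime P Q) (hdeg : max P.natDegree Q.natDegree = d)
    (heq : P * B.comp (X ^ n) = Q * (X * A.comp (X ^ n))) :
    d = n * r - 1 ∨ d = n * r ∨ d = n * r + 1 := by
  have hXn : (X ^ n : ℂ[X]) ≠ C ((X ^ n : ℂ[X]).coeff 0) := by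
    intro h
    have h2 := congrArg natDegree h
    rw [natDegree_X_pow, natDegree_C] at h2
    omega
  have hB' : B.comp (X ^ n) ≠ 0 := by
    intro h
    rw [comp_eq_zero_iff] at h
    rcases h with h | ⟨_, h⟩
    · exact hB h
    · exact hXn h
  have hP : P ≠ 0 := by
    intro h
    subst h
    have h1 : Q.natDegree = 0 :=
      natDegree_eq_zero_of_isUnit (isCoprime_zero_left.mp hPQ)
    rw [natDegree_zero, h1] at hdeg
    omega
  have hA : A ≠ 0 := by
    intro h
    subst h
    rw [zero_comp, mul_zero, mul_zero] at heq
    rcases mul_eq_zero.mp heq with h | h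
    · exact hP h
    · exact hB' h
  have hA' : A.comp (X ^ n) ≠ 0 := by
    intro h
    rw [comp_eq_zero_iff] at h
    rcases h with h | ⟨_, h⟩
    · exact hA h
    · exact hXn h
  have hAB' : IsCoprime (A.comp (X ^ n)) (B.comp (X ^ n)) := by
    have := hAB.map (aeval (X ^ n : ℂ[X]) : ℂ[X] →ₐ[ℂ] ℂ[X]).toRingHom
    simpa [comp_eq_aeval] using this
  have hdvd : P ∣ X * A.comp (X ^ n) := by
    apply hPQ.dvd_of_dvd_mul_left
    exact ⟨B.comp (X ^ n), heq.symm⟩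
  obtain ⟨c, hc⟩ := hdvd
  have hc' : B.comp (X ^ n) = Q * c := by
    refine mul_left_cancel₀ hP ?_
    rw [heq, hc]; ring
  have hcne : c ≠ 0 := by
    intro h; rw [h, mul_zero] at hc'; exact hB' hc'
  have hcX : c ∣ X := by
    have h1 : IsCoprime c (A.comp (X ^ n)) :=
      (hAB'.of_isCoprime_of_dvd_right ⟨Q, by rw [hc']; ring⟩).symm
    apply h1.dvd_of_dvd_mul_left
    exact ⟨P, by linear_combination hc⟩
  have hce : c.natDegree ≤ 1 := by
    have := natDegree_le_of_dvd hcX X_ne_zero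
    simpa using this
  have hdP : P.natDegree + c.natDegree = 1 + A.natDegree * n := by
    have h1 := congrArg natDegree hc
    rw [natDegree_mul X_ne_zero hA', natDegree_mul hP hcne, natDegree_X,
      natDegree_comp, natDegree_X_pow] at h1
    omega
  have hdQ : Q.natDegree + c.natDegree = B.natDegree * n := by
    have h1 := congrArg natDegree hc'
    rw [natDegree_mul hQ hcne, natDegree_comp, natDegree_X_pow] at h1
    omega
  have hK2 : n ≤ r * n := Nat.le_mul_of_pos_left n hr
  rw [mul_comm n r]
  rcases lt_or_ge A.natDegree B.natDegree with hab | hab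
  · rw [max_eq_right hab.le] at hrdeg
    have haa : A.natDegree * n + n ≤ r * n := by
      calc A.natDegree * n + n = (A.natDegree + 1) * n := by ring
        _ ≤ r * n := Nat.mul_le_mul_right n (by omega)
    rw [hrdeg] at hdQ
    generalize A.natDegree * n = M at hdP haa
    generalize r * n = K at hdQ haa hK2 ⊢
    rcases le_total P.natDegree Q.natDegree with h | h
    · rw [max_eq_right h] at hdeg; omega
    · rw [max_eq_left h] at hdeg; omega
  · rw [max_eq_left hab] at hrdeg
    have hbb : B.natDegree * n ≤ r * n := Nat.mul_le_mul_right n (hrdeg ▸ hab)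
    rw [hrdeg] at hdP
    generalize B.natDegree * n = M at hdQ hbb
    generalize r * n = K at hdP hbb hK2 ⊢
    rcases le_total P.natDegree Q.natDegree with h | h
    · rw [max_eq_right h] at hdeg; omega
    · rw [max_eq_left h] at hdeg; omega
end
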